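/- Let S be a tournament and let (T_j)_{j∈V(S)} be a family of pairwise disjoint nonempty acyclic tournaments. Then the inversion index of the lexicographic sum ∑_{j∈S} T_j equals the inversion index of S: i(∑_{j∈S} T_j) = i(S). -/

import Mathlib

/-- A tournament on a vertex set `V`: a loopless directed graph such that for all
distinct `x, y` exactly one of `(x,y)`, `(y,x)` is an arc. -/
structure Tournament (V : Type*) where
  rel : V → V → Prop
  irrefl : ∀ x, ¬ rel x x
  total : ∀ x y, x ≠ y → rel x y ∨ rel y x
  asymm : ∀ x y, rel x y → ¬ rel y x

namespace Tournament

variable {V : Type*} {W : Type*}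

/-- The tournament obtained from `T` by reversing all arcs both of whose
endpoints lie in `X`. -/
def inv (T : Tournament V) (X : Set V) : Tournament V where
  rel x y := (x ∈ X ∧ y ∈ X ∧ T.rel y x) ∨ ((x ∉ X ∨ y ∉ X) ∧ T.rel x y)
  irrefl x := by have := T.irrefl x; tauto
  total x y hxy := by
    have := T.total x y hxy
    by_cases hx : x ∈ X <;> by_cases hy : y ∈ X <;> tauto
  asymm x y := by have h1 := T.asymm x y; have h2 := T.asymm y x; tauto

/-- Successive inversions along a finite sequence of subsets (`X_0` first). -/
def invSeq (T : Tournament V) (Xs : List (Set V)) : Tournament V :=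
  Xs.foldl Tournament.inv T

/-- A tournament is acyclic (transitive) when its arc relation is transitive,
i.e. a strict linear order. -/
def IsAcyclic (T : Tournament V) : Prop :=
  ∀ x y z, T.rel x y → T.rel y z → T.rel x z

/-- The inversion index: the least number of subsets to be inverted to reach an
acyclic tournament. -/
noncomputable def index (T : Tournament V) : ℕ :=
  sInf {m | ∃ Xs : List (Set V), Xs.length = m ∧ (T.invSeq Xs).IsAcyclic}

/-- Induced subtournament on a set of vertices. -/
def restrict (T : Tournament V) (A : Set V) : Tournament A where
  rel x y := T.rel x y
  irrefl x := T.irrefl x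
  total x y hxy := T.total x y (fun h => hxy (Subtype.ext h))
  asymm x y := T.asymm x y

/-- `T − x`: the subtournament induced on `V ∖ {x}`. -/
def erase (T : Tournament V) (x : V) : Tournament {y : V // y ≠ x} :=
  T.restrict {y | y ≠ x}

/-- `S` embeds into `T`: `S` is isomorphic to the subtournament of `T` induced on
some subset of the vertices of `T`. -/
def Embeds (S : Tournament V) (T : Tournament W) : Prop :=
  ∃ f : V → W, Function.Injective f ∧ ∀ x y, S.rel x y ↔ T.rel (f x) (f y)

/-- Isomorphism of tournaments. -/
def Iso (S : Tournament V) (T : Tournament W) : Prop :=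
  ∃ e : V ≃ W, ∀ x y, S.rel x y ↔ T.rel (e x) (e y)

/-- The dual tournament, obtained by reversing all arcs. -/
def dual (T : Tournament V) : Tournament V where
  rel x y := T.rel y x
  irrefl x := T.irrefl x
  total x y hxy := (T.total x y hxy).symm
  asymm x y h := T.asymm y x h

/-- `X` is an interval of `T`. -/
def IsInterval (T : Tournament V) (X : Set V) : Prop :=
  ∀ y ∉ X, (∀ x ∈ X, T.rel x y) ∨ (∀ x ∈ X, T.rel y x)

/-- A tournament is indecomposable when all its intervals are trivial. -/
def Indecomposable (T : Tournament V) : Prop :=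
  ∀ X : Set V, T.IsInterval X → X = ∅ ∨ X = Set.univ ∨ ∃ x, X = {x}

end Tournament

/-- The transitive tournament `n̲` on `{0, …, n−1}`, with arcs `(i,j)` for `i < j`. -/
def linear (n : ℕ) : Tournament (Fin n) where
  rel x y := x < y
  irrefl x := lt_irrefl x
  total x y h := by rcases lt_trichotomy x y with h' | h' | h' <;> tauto
  asymm _ _ h := lt_asymm h

/-- `2ℕ_{<k} = {0, 2, …, 2(k−1)}` as a subset of `Fin N`. -/
def evensLT {N : ℕ} (k : ℕ) : Set (Fin N) := {i | (i : ℕ) % 2 = 0 ∧ (i : ℕ) < 2 * k}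

/-- `2ℕ_{<k}+1 = {1, 3, …, 2k−1}` as a subset of `Fin N`. -/
def oddsLT {N : ℕ} (k : ℕ) : Set (Fin N) := {i | (i : ℕ) % 2 = 1 ∧ (i : ℕ) < 2 * k}

namespace Tournament

/-- The inversion index with values in `ℕ∞`: it is `⊤` (infinite) when no finite
sequence of inversions makes the tournament acyclic. -/
noncomputable def indexE {V : Type*} (T : Tournament V) : ℕ∞ :=
  sInf {n : ℕ∞ | ∃ Xs : List (Set V), (Xs.length : ℕ∞) = n ∧ (T.invSeq Xs).IsAcyclic}

end Tournament

section Aux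

namespace Tournament

variable {I : Type*} {V : I → Type*}

lemma isAcyclic_dual' {α : Type*} (T : Tournament α) (h : T.IsAcyclic) :
    T.dual.IsAcyclic := fun x y z hxy hyz => h z y x hyz hxy

/-- `W` is a lexicographic sum of acyclic tournaments over `S`. -/
def IsLexAc (S : Tournament I) (W : Tournament (Σ i, V i)) : Prop :=
  ∃ T : ∀ i, Tournament (V i), (∀ i, (T i).IsAcyclic) ∧
    ∀ p q : Σ i, V i, W.rel p q ↔
      ((p.1 ≠ q.1 ∧ S.rel p.1 q.1) ∨ ∃ h : p.1 = q.1, (T q.1).rel (h ▸ p.2) q.2)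

lemma exists_eq_rec_iff {i : I} {a b : V i} {R : V i → V i → Prop} :
    (∃ h : i = i, R (h ▸ a) b) ↔ R a b :=
  ⟨fun ⟨_, hq⟩ => hq, fun hq => ⟨rfl, hq⟩⟩

lemma isLexAc_inv {S : Tournament I} {W : Tournament (Σ i, V i)}
    (h : IsLexAc S W) (Y : Set I) :
    IsLexAc (S.inv Y) (W.inv (Sigma.fst ⁻¹' Y)) := by
  classical
  obtain ⟨T, hT, hrel⟩ := h
  have hsame : ∀ i (x y : V i), W.rel ⟨i, x⟩ ⟨i, y⟩ ↔ (T i).rel x y := by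
    intro i x y
    rw [hrel]
    simp
  have hcross : ∀ (i j) (x : V i) (y : V j), i ≠ j →
      (W.rel ⟨i, x⟩ ⟨j, y⟩ ↔ S.rel i j) := by
    intro i j x y hij
    rw [hrel]
    constructor
    · rintro (⟨_, hs⟩ | ⟨h, _⟩)
      · exact hs
      · exact absurd h hij
    · intro hs; exact Or.inl ⟨hij, hs⟩
  refine ⟨fun i => if i ∈ Y then (T i).dual else T i, ?_, ?_⟩
  · intro i
    by_cases hi : i ∈ Y
    · simpa [hi] using isAcyclic_dual' (T i) (hT i)
    · simpa [hi] using hT i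
  · rintro ⟨i, a⟩ ⟨j, b⟩
    by_cases hij : i = j
    · subst hij
      show ((i ∈ Y ∧ i ∈ Y ∧ W.rel ⟨i, b⟩ ⟨i, a⟩) ∨
          ((i ∉ Y ∨ i ∉ Y) ∧ W.rel ⟨i, a⟩ ⟨i, b⟩)) ↔ _
      rw [hsame, hsame]
      constructor
      · rintro (⟨hi, _, hr⟩ | ⟨hi, hr⟩)
        · refine Or.inr ⟨rfl, ?_⟩
          show (if i ∈ Y then (T i).dual else T i).rel a b
          simp only [hi, if_true]; exact hr
        · refine Or.inr ⟨rfl, ?_⟩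
          have hi' : i ∉ Y := by tauto
          show (if i ∈ Y then (T i).dual else T i).rel a b
          simp only [hi', if_false]; exact hr
      · rintro (⟨hne, _⟩ | ⟨h, hr⟩)
        · exact absurd rfl hne
        · have hr' : (if i ∈ Y then (T i).dual else T i).rel a b := hr
          by_cases hi : i ∈ Y
          · simp only [hi, if_true] at hr'
            exact Or.inl ⟨hi, hi, hr'⟩
          · simp only [hi, if_false] at hr'
            exact Or.inr ⟨Or.inl hi, hr'⟩
    · show ((i ∈ Y ∧ j ∈ Y ∧ W.rel ⟨j, b⟩ ⟨i, a⟩) ∨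
          ((i ∉ Y ∨ j ∉ Y) ∧ W.rel ⟨i, a⟩ ⟨j, b⟩)) ↔ _
      rw [hcross j i b a (Ne.symm hij), hcross i j a b hij]
      constructor
      · rintro (⟨hi, hj, hr⟩ | ⟨hi, hr⟩)
        · exact Or.inl ⟨hij, Or.inl ⟨hi, hj, hr⟩⟩
        · exact Or.inl ⟨hij, Or.inr ⟨hi, hr⟩⟩
      · rintro (⟨_, (⟨hi, hj, hr⟩ | ⟨hi, hr⟩)⟩ | ⟨h, _⟩)
        · exact Or.inl ⟨hi, hj, hr⟩
        · exact Or.inr ⟨hi, hr⟩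
        · exact absurd h hij

lemma isLexAc_invSeq :
    ∀ (Xs : List (Set I)) (S : Tournament I) (W : Tournament (Σ i, V i)),
      IsLexAc S W →
      IsLexAc (S.invSeq Xs) (W.invSeq (Xs.map (fun X => Sigma.fst ⁻¹' X)))
  | [], _, _, h => h
  | X :: Xs, S, W, h => isLexAc_invSeq Xs _ _ (isLexAc_inv h X)

lemma IsLexAc.isAcyclic {S : Tournament I} {W : Tournament (Σ i, V i)}
    (h : IsLexAc S W) (hS : S.IsAcyclic) : W.IsAcyclic := by
  obtain ⟨T, hT, hrel⟩ := h
  rintro ⟨i, a⟩ ⟨j, b⟩ ⟨k, c⟩ h1 h2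
  rw [hrel] at h1 h2 ⊢
  rcases h1 with ⟨hij, hs1⟩ | ⟨h1e, hf1⟩
  · rcases h2 with ⟨hjk, hs2⟩ | ⟨h2e, hf2⟩
    · by_cases hik : i = k
      · subst hik
        exact absurd hs2 (S.asymm i j hs1)
      · exact Or.inl ⟨hik, hS i j k hs1 hs2⟩
    · cases h2e
      exact Or.inl ⟨hij, hs1⟩
  · cases h1e
    rcases h2 with ⟨hjk, hs2⟩ | ⟨h2e, hf2⟩
    · exact Or.inl ⟨hjk, hs2⟩
    · cases h2e
      exact Or.inr ⟨rfl, hT _ _ _ _ hf1 hf2⟩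

lemma rel_iff_invSeq_pullback {α β : Type*} (e : α → β) :
    ∀ (Xs : List (Set β)) (S : Tournament α) (W : Tournament β),
      (∀ i j, i ≠ j → (S.rel i j ↔ W.rel (e i) (e j))) →
      ∀ i j, i ≠ j →
        ((S.invSeq (Xs.map (fun X => e ⁻¹' X))).rel i j ↔ (W.invSeq Xs).rel (e i) (e j))
  | [], _, _, h => h
  | X :: Xs, S, W, h => by
    intro i j hij
    have step : ∀ i j, i ≠ j →
        ((S.inv (e ⁻¹' X)).rel i j ↔ (W.inv X).rel (e i) (e j)) := by
      intro i j hij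
      have h1 := h i j hij
      have h2 := h j i hij.symm
      show ((i ∈ e ⁻¹' X ∧ j ∈ e ⁻¹' X ∧ S.rel j i) ∨
          ((i ∉ e ⁻¹' X ∨ j ∉ e ⁻¹' X) ∧ S.rel i j)) ↔ _
      simp only [Set.mem_preimage]
      show _ ↔ ((e i ∈ X ∧ e j ∈ X ∧ W.rel (e j) (e i)) ∨
          ((e i ∉ X ∨ e j ∉ X) ∧ W.rel (e i) (e j)))
      tauto
    exact rel_iff_invSeq_pullback e Xs (S.inv (e ⁻¹' X)) (W.inv X) step i j hij

lemma isAcyclic_of_pullback {α β : Type*} (e : α → β) (S : Tournament α)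
    (W : Tournament β) (h : ∀ i j, i ≠ j → (S.rel i j ↔ W.rel (e i) (e j)))
    (hW : W.IsAcyclic) : S.IsAcyclic := by
  intro x y z hxy hyz
  have hxyne : x ≠ y := fun h' => S.irrefl x (h' ▸ hxy)
  have hyzne : y ≠ z := fun h' => S.irrefl y (h' ▸ hyz)
  by_cases hxz : x = z
  · subst hxz
    exact absurd hyz (S.asymm x y hxy)
  · exact (h x z hxz).2 (hW _ _ _ ((h x y hxyne).1 hxy) ((h y z hyzne).1 hyz))

end Tournament

end Aux

/-- the inversion index of a lexicographic sum of nonempty acyclic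
tournaments `(T_i)` indexed by a tournament `S` equals the inversion index of `S`.
(The lexicographic sum is axiomatized by `hW` on the sigma type of the family.) -/
theorem index_lexSum {I : Type*} {V : I → Type*} (S : Tournament I)
    (T : ∀ i, Tournament (V i))
    (hne : ∀ i, Nonempty (V i)) (hac : ∀ i, (T i).IsAcyclic)
    (W : Tournament (Σ i, V i))
    (hW : ∀ p q : Σ i, V i, W.rel p q ↔
      ((p.1 ≠ q.1 ∧ S.rel p.1 q.1) ∨ ∃ h : p.1 = q.1, (T q.1).rel (h ▸ p.2) q.2)) :
    W.indexE = S.indexE := by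
  have hlex : Tournament.IsLexAc S W := ⟨T, hac, hW⟩
  apply le_antisymm
  · apply sInf_le_sInf
    rintro n ⟨Xs, hlen, hacS⟩
    refine ⟨Xs.map (fun X => Sigma.fst ⁻¹' X), by simpa using hlen, ?_⟩
    exact (Tournament.isLexAc_invSeq Xs S W hlex).isAcyclic hacS
  · apply sInf_le_sInf
    rintro n ⟨Xs, hlen, hacW⟩
    set e : I → (Σ i, V i) := fun i => ⟨i, (hne i).some⟩ with he
    have hbase : ∀ i j, i ≠ j → (S.rel i j ↔ W.rel (e i) (e j)) := by
      intro i j hij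
      rw [hW]
      constructor
      · intro hs; exact Or.inl ⟨hij, hs⟩
      · rintro (⟨_, hs⟩ | ⟨h, _⟩)
        · exact hs
        · exact absurd h hij
    refine ⟨Xs.map (fun X => e ⁻¹' X), by simpa using hlen, ?_⟩
    have hiff := Tournament.rel_iff_invSeq_pullback e Xs S W hbase
    exact Tournament.isAcyclic_of_pullback e _ _ hiff hacW
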